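/- (Conditional second moment of the orthogonal score.) Let a > 0. Suppose Y, T : Ω → ℝ are square-integrable random variables and y_o, t_o : E → ℝ are bounded measurable functions such that almost surely E[Y | X] = y_o(X), E[Y² | X] = 1, E[T | X] = t_o(X), E[Y·T | X] = y_o(X)·t_o(X), and such that for almost every x, t_o(x)²·(1 − y_o(x)²) + v(x)·y_o(x)² = t_o(x)³/a², where v : E → ℝ is measurable with E[(T − t_o(X))² | X] = v(X) almost surely. Then E[ ( y_o(X)·(T − t_o(X)) − t_o(X)·(Y − y_o(X)) )² ] = a^{−2}·E[ t_o(X)³ ]. -/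

import Mathlib

open MeasureTheory

private lemma integrable_mul_of_memL2 {Ω : Type*} [MeasurableSpace Ω] {μ : Measure Ω}
    {f g : Ω → ℝ} (hf : MemLp f 2 μ) (hg : MemLp g 2 μ) :
    Integrable (fun ω => f ω * g ω) μ := by
  refine Integrable.mono' ((hf.integrable_sq.add hg.integrable_sq).div_const 2)
    (hf.aestronglyMeasurable.mul hg.aestronglyMeasurable) (Filter.Eventually.of_forall fun ω => ?_)
  simp only [Pi.add_apply, Real.norm_eq_abs, abs_mul]
  nlinarith [abs_nonneg (f ω), abs_nonneg (g ω), sq_nonneg (|f ω| - |g ω|), sq_abs (f ω),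
    sq_abs (g ω)]

/-- **Conditional second moment of the orthogonal score.**
Under the conditional moment conditions `E[Y|X] = y_o(X)`, `E[Y²|X] = 1`, `E[T|X] = t_o(X)`,
`E[YT|X] = y_o(X) t_o(X)`, `E[(T - t_o(X))²|X] = v(X)`, together with the pointwise identity
`t_o²(1 - y_o²) + v y_o² = t_o³/a²` (a.e.), one has
`E[(y_o(X)(T - t_o(X)) - t_o(X)(Y - y_o(X)))²] = a⁻² E[t_o(X)³]`. -/
theorem ortho_score_second_moment
    {Ω : Type*} [MeasurableSpace Ω] {μ : Measure Ω} [IsProbabilityMeasure μ]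
    {E : Type*} [mE : MeasurableSpace E] (X : Ω → E) (hX : Measurable X)
    (a : ℝ) (ha : 0 < a)
    (Y T : Ω → ℝ) (hY : Measurable Y) (hT : Measurable T)
    (hY2 : MemLp Y 2 μ) (hT2 : MemLp T 2 μ)
    (y_o t_o v : E → ℝ) (hyo : Measurable y_o) (hto : Measurable t_o) (hv : Measurable v)
    (hyoB : ∃ C, ∀ x, |y_o x| ≤ C) (htoB : ∃ C, ∀ x, |t_o x| ≤ C)
    (hYcond : μ[Y | MeasurableSpace.comap X mE] =ᵐ[μ] fun ω => y_o (X ω))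
    (hY2cond : μ[(fun ω => (Y ω) ^ 2) | MeasurableSpace.comap X mE] =ᵐ[μ] fun _ => (1 : ℝ))
    (hTcond : μ[T | MeasurableSpace.comap X mE] =ᵐ[μ] fun ω => t_o (X ω))
    (hYTcond : μ[(fun ω => Y ω * T ω) | MeasurableSpace.comap X mE] =ᵐ[μ]
      fun ω => y_o (X ω) * t_o (X ω))
    (hvcond : μ[(fun ω => (T ω - t_o (X ω)) ^ 2) | MeasurableSpace.comap X mE] =ᵐ[μ]
      fun ω => v (X ω))
    (hident : ∀ᵐ ω ∂μ,
      (t_o (X ω)) ^ 2 * (1 - (y_o (X ω)) ^ 2) + v (X ω) * (y_o (X ω)) ^ 2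
        = (t_o (X ω)) ^ 3 / a ^ 2) :
    ∫ ω, (y_o (X ω) * (T ω - t_o (X ω)) - t_o (X ω) * (Y ω - y_o (X ω))) ^ 2 ∂μ
      = a⁻¹ ^ 2 * ∫ ω, (t_o (X ω)) ^ 3 ∂μ := by
  obtain ⟨Cg, hCg⟩ := hyoB
  obtain ⟨Ch, hCh⟩ := htoB
  have hgmeas : Measurable fun ω => y_o (X ω) := hyo.comp hX
  have hhmeas : Measurable fun ω => t_o (X ω) := hto.comp hX
  -- the five component functions
  set f1 : Ω → ℝ := fun ω => (y_o (X ω)) ^ 2 with hf1def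
  set g1 : Ω → ℝ := fun ω => (T ω - t_o (X ω)) ^ 2 with hg1def
  set f2 : Ω → ℝ := fun ω => (-2 : ℝ) * (y_o (X ω) * t_o (X ω)) with hf2def
  set g2 : Ω → ℝ := fun ω => Y ω * T ω with hg2def
  set f3 : Ω → ℝ := fun ω => (2 : ℝ) * ((y_o (X ω)) ^ 2 * t_o (X ω)) with hf3def
  set f4 : Ω → ℝ := fun ω => (t_o (X ω)) ^ 2 with hf4def
  set g4 : Ω → ℝ := fun ω => (Y ω) ^ 2 with hg4def
  set f5 : Ω → ℝ := fun ω => -((y_o (X ω)) ^ 2 * (t_o (X ω)) ^ 2) with hf5def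
  -- basic integrability
  have hTi : Integrable T μ := hT2.integrable one_le_two
  have hY2i : Integrable g4 μ := hY2.integrable_sq
  have hYTi : Integrable g2 μ := integrable_mul_of_memL2 hY2 hT2
  have hhL2 : MemLp (fun ω => t_o (X ω)) 2 μ :=
    MemLp.of_bound hhmeas.aestronglyMeasurable Ch
      (Filter.Eventually.of_forall fun ω => by
        simpa [Real.norm_eq_abs] using hCh (X ω))
  have hW2i : Integrable g1 μ := (hT2.sub hhL2).integrable_sq
  -- integrability of the products
  have i1 : Integrable (f1 * g1) μ := by
    refine hW2i.bdd_mul (hgmeas.pow_const 2).aestronglyMeasurable (c := Cg ^ 2) (Filter.Eventually.of_forall fun ω => ?_)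
    rw [hf1def, Real.norm_eq_abs, abs_pow]
    exact pow_le_pow_left₀ (abs_nonneg _) (hCg (X ω)) 2
  have i2 : Integrable (f2 * g2) μ := by
    refine hYTi.bdd_mul ((hgmeas.mul hhmeas).const_mul (-2)).aestronglyMeasurable
      (c := 2 * (Cg * Ch)) (Filter.Eventually.of_forall fun ω => ?_)
    rw [hf2def]
    simp only [Real.norm_eq_abs, abs_mul, abs_neg, abs_two]
    nlinarith [hCg (X ω), hCh (X ω), abs_nonneg (y_o (X ω)), abs_nonneg (t_o (X ω))]
  have i3 : Integrable (f3 * T) μ := by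
    refine hTi.bdd_mul (((hgmeas.pow_const 2).mul hhmeas).const_mul 2).aestronglyMeasurable
      (c := 2 * (Cg ^ 2 * Ch)) (Filter.Eventually.of_forall fun ω => ?_)
    rw [hf3def]
    simp only [Real.norm_eq_abs, abs_mul, abs_two, abs_pow]
    have h1 : |y_o (X ω)| ^ 2 ≤ Cg ^ 2 := pow_le_pow_left₀ (abs_nonneg _) (hCg (X ω)) 2
    nlinarith [hCh (X ω), abs_nonneg (t_o (X ω)), sq_nonneg (|y_o (X ω)|), sq_abs (y_o (X ω)),
      pow_nonneg (abs_nonneg (y_o (X ω))) 2]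
  have i4 : Integrable (f4 * g4) μ := by
    refine hY2i.bdd_mul (hhmeas.pow_const 2).aestronglyMeasurable (c := Ch ^ 2) (Filter.Eventually.of_forall fun ω => ?_)
    rw [hf4def, Real.norm_eq_abs, abs_pow]
    exact pow_le_pow_left₀ (abs_nonneg _) (hCh (X ω)) 2
  have i5 : Integrable f5 μ := by
    have hb : ∀ᵐ ω ∂μ, ‖f5 ω‖ ≤ Cg ^ 2 * Ch ^ 2 := by
      refine Filter.Eventually.of_forall fun ω => ?_
      rw [hf5def]
      simp only [Real.norm_eq_abs, abs_neg, abs_mul, abs_pow]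
      have h1 : |y_o (X ω)| ^ 2 ≤ Cg ^ 2 := pow_le_pow_left₀ (abs_nonneg _) (hCg (X ω)) 2
      have h2 : |t_o (X ω)| ^ 2 ≤ Ch ^ 2 := pow_le_pow_left₀ (abs_nonneg _) (hCh (X ω)) 2
      nlinarith [pow_nonneg (abs_nonneg (y_o (X ω))) 2, pow_nonneg (abs_nonneg (t_o (X ω))) 2]
    exact memLp_one_iff_integrable.mp
      (MemLp.of_bound (((hgmeas.pow_const 2).mul (hhmeas.pow_const 2)).neg).aestronglyMeasurable
        _ hb)
  -- now introduce the sub-σ-algebra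
  set m := MeasurableSpace.comap X mE with hmdef
  have hm : m ≤ _ := measurable_iff_comap_le.mp hX
  have hXm : Measurable[m] X := fun s hs => ⟨s, hs, rfl⟩
  have hgM : Measurable[m] fun ω => y_o (X ω) := hyo.comp hXm
  have hhM : Measurable[m] fun ω => t_o (X ω) := hto.comp hXm
  have hf1m : StronglyMeasurable[m] f1 := (hgM.pow_const 2).stronglyMeasurable
  have hf2m : StronglyMeasurable[m] f2 := ((hgM.mul hhM).const_mul (-2)).stronglyMeasurable
  have hf3m : StronglyMeasurable[m] f3 :=
    (((hgM.pow_const 2).mul hhM).const_mul 2).stronglyMeasurable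
  have hf4m : StronglyMeasurable[m] f4 := (hhM.pow_const 2).stronglyMeasurable
  have hf5m : StronglyMeasurable[m] f5 :=
    (((hgM.pow_const 2).mul (hhM.pow_const 2)).neg).stronglyMeasurable
  -- conditional expectations of each term
  have h1 : μ[f1 * g1 | m] =ᵐ[μ] fun ω => (y_o (X ω)) ^ 2 * v (X ω) := by
    refine (condExp_mul_of_stronglyMeasurable_left hf1m i1 hW2i).trans ?_
    filter_upwards [hvcond] with ω hω
    rw [Pi.mul_apply, hω]
  have h2 : μ[f2 * g2 | m] =ᵐ[μ]
      fun ω => (-2 : ℝ) * (y_o (X ω) * t_o (X ω)) * (y_o (X ω) * t_o (X ω)) := by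
    refine (condExp_mul_of_stronglyMeasurable_left hf2m i2 hYTi).trans ?_
    filter_upwards [hYTcond] with ω hω
    rw [Pi.mul_apply, hω]
  have h3 : μ[f3 * T | m] =ᵐ[μ]
      fun ω => (2 : ℝ) * ((y_o (X ω)) ^ 2 * t_o (X ω)) * t_o (X ω) := by
    refine (condExp_mul_of_stronglyMeasurable_left hf3m i3 hTi).trans ?_
    filter_upwards [hTcond] with ω hω
    rw [Pi.mul_apply, hω]
  have h4 : μ[f4 * g4 | m] =ᵐ[μ] fun ω => (t_o (X ω)) ^ 2 * 1 := by
    refine (condExp_mul_of_stronglyMeasurable_left hf4m i4 hY2i).trans ?_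
    filter_upwards [hY2cond] with ω hω
    rw [Pi.mul_apply, hω]
  have h5 : μ[f5 | m] = f5 := condExp_of_stronglyMeasurable hm hf5m i5
  -- conditional expectation of the sum
  have hsum : μ[f1 * g1 + f2 * g2 + f3 * T + f4 * g4 + f5 | m] =ᵐ[μ]
      μ[f1 * g1 | m] + μ[f2 * g2 | m] + μ[f3 * T | m] + μ[f4 * g4 | m] + μ[f5 | m] := by
    refine (condExp_add ((((i1.add i2)).add i3).add i4) i5 m).trans ?_
    refine Filter.EventuallyEq.add ?_ Filter.EventuallyEq.rfl
    refine (condExp_add ((i1.add i2).add i3) i4 m).trans ?_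
    refine Filter.EventuallyEq.add ?_ Filter.EventuallyEq.rfl
    refine (condExp_add (i1.add i2) i3 m).trans ?_
    refine Filter.EventuallyEq.add ?_ Filter.EventuallyEq.rfl
    exact condExp_add i1 i2 m
  have key : μ[f1 * g1 + f2 * g2 + f3 * T + f4 * g4 + f5 | m] =ᵐ[μ]
      fun ω => (t_o (X ω)) ^ 3 / a ^ 2 := by
    refine hsum.trans ?_
    filter_upwards [h1, h2, h3, h4, hident] with ω e1 e2 e3 e4 hid
    simp only [Pi.add_apply, e1, e2, e3, e4, h5]
    simp only [hf5def]
    linear_combination hid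
  -- put everything together
  calc ∫ ω, (y_o (X ω) * (T ω - t_o (X ω)) - t_o (X ω) * (Y ω - y_o (X ω))) ^ 2 ∂μ
      = ∫ ω, (f1 * g1 + f2 * g2 + f3 * T + f4 * g4 + f5) ω ∂μ := by
        refine integral_congr_ae (Filter.Eventually.of_forall fun ω => ?_)
        simp only [Pi.add_apply, Pi.mul_apply, hf1def, hg1def, hf2def, hg2def, hf3def, hf4def,
          hg4def, hf5def]
        ring
    _ = ∫ ω, (μ[f1 * g1 + f2 * g2 + f3 * T + f4 * g4 + f5 | m]) ω ∂μ :=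
        (integral_condExp hm).symm
    _ = ∫ ω, (t_o (X ω)) ^ 3 / a ^ 2 ∂μ := integral_congr_ae key
    _ = a⁻¹ ^ 2 * ∫ ω, (t_o (X ω)) ^ 3 ∂μ := by
        rw [integral_div, div_eq_mul_inv, ← inv_pow, mul_comm]
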